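/- If R, S : A → A are compatible Rota-Baxter operators on an associative algebra A, then the products a·_R b = R(a)·b + a·R(b) and a·_S b = S(a)·b + a·S(b) define a compatible associative algebra structure on A. -/
import Mathlib


/-- If `R, S` are compatible Rota-Baxter operators on an associative algebra `A`, then the
products `a ·_R b = R(a)·b + a·R(b)` and `a ·_S b = S(a)·b + a·S(b)` define a compatible
associative algebra structure on `A`. -/
theorem compatible_rota_baxter_gives_compatible_associative
    {K A : Type*} [Field K] [CharZero K] [AddCommGroup A] [Module K A]
    (μ : A →ₗ[K] A →ₗ[K] A)
    (hassoc : ∀ a b c : A, μ (μ a b) c = μ a (μ b c))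
    (R S : A →ₗ[K] A)
    (hR : ∀ a b : A, μ (R a) (R b) = R (μ (R a) b + μ a (R b)))
    (hS : ∀ a b : A, μ (S a) (S b) = S (μ (S a) b + μ a (S b)))
    (hRS : ∀ a b : A, μ (R a) (S b) + μ (S a) (R b)
      = R (μ (S a) b + μ a (S b)) + S (μ (R a) b + μ a (R b)))
    (μR μS : A → A → A)
    (hμR : ∀ a b : A, μR a b = μ (R a) b + μ a (R b))
    (hμS : ∀ a b : A, μS a b = μ (S a) b + μ a (S b)) :
    (∀ a b c : A, μR (μR a b) c = μR a (μR b c)) ∧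
    (∀ a b c : A, μS (μS a b) c = μS a (μS b c)) ∧
    (∀ a b c : A, μS (μR a b) c + μR (μS a b) c = μR a (μS b c) + μS a (μR b c)) := by
  refine ⟨fun a b c => ?_, fun a b c => ?_, fun a b c => ?_⟩
  · simp only [hμR, ← hR, map_add, LinearMap.add_apply, hassoc]
    abel
  · simp only [hμS, ← hS, map_add, LinearMap.add_apply, hassoc]
    abel
  · have h1 := congrArg (fun x => μ x c) (hRS a b)
    have h2 := congrArg (fun x => μ a x) (hRS b c)
    simp only [map_add, LinearMap.add_apply] at h1 h2
    simp only [hμR, hμS, map_add, LinearMap.add_apply, hassoc] at h1 h2 ⊢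
    linear_combination (norm := abel) h2 - h1
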